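/- For any lawful functor τ (fmap satisfies fmap id = id and fmap (f ∘ g) = fmap f ∘ fmap g on pointed cpos), if f : α → β is strict (f ⊥ = ⊥), then fmap f is strict: fmap f ⊥ = ⊥. -/

import Mathlib

open OmegaCompletePartialOrder

/-- For any lawful functor on pointed cpos, `fmap` of a strict function is strict. -/
theorem fmap_strict {α β TA TB : Type*}
    [OmegaCompletePartialOrder α] [OrderBot α]
    [OmegaCompletePartialOrder β] [OrderBot β]
    [OmegaCompletePartialOrder TA] [OrderBot TA]
    [OmegaCompletePartialOrder TB] [OrderBot TB]
    (fmapAB : (α → β) → TA → TB) (fmapBA : (β → α) → TB → TA)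
    (fmapBB : (β → β) → TB → TB)
    (hcontAB : ∀ f, OmegaCompletePartialOrder.ωScottContinuous (fmapAB f))
    (hcontBA : ∀ g, OmegaCompletePartialOrder.ωScottContinuous (fmapBA g))
    (hmonoBB : ∀ h₁ h₂ : β → β, (∀ x, h₁ x ≤ h₂ x) → ∀ t, fmapBB h₁ t ≤ fmapBB h₂ t)
    (hid : ∀ t, fmapBB id t = t)
    (hcomp : ∀ (f : α → β) (g : β → α) (t : TB),
        fmapBB (f ∘ g) t = fmapAB f (fmapBA g t))
    (f : α → β) (hf : f ⊥ = ⊥) :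
    fmapAB f ⊥ = ⊥ := by
  have hmono := (hcontAB f).monotone
  apply le_antisymm _ bot_le
  calc fmapAB f ⊥ ≤ fmapAB f (fmapBA (fun _ => ⊥) ⊥) := hmono bot_le
    _ = fmapBB (f ∘ fun _ => ⊥) ⊥ := (hcomp _ _ _).symm
    _ ≤ fmapBB id ⊥ := hmonoBB _ _ (fun x => by simp [hf]) _
    _ = ⊥ := hid _
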